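/- Let X be a standardized 3-Dirac mixture with ordered locations μ_1 < μ_2 < μ_3 and probabilities ε_1, ε_2, ε_3 > 0 summing to 1, and let s* denote the smallest minimizer of s ↦ Var|X − s|. Assume s* ∈ [μ_1, μ_2]. Then Φ*(X) = 4 · min_{s ∈ ℝ} Var|X − s| ≥ 1 if and only if μ_1 ≥ F(ε_1), where F(ε_1) = −(√3/2)·√((1 − ε_1)/ε_1). -/

import Mathlib

open MeasureTheory ProbabilityTheory

lemma dirac3_integrable {f : ℝ → ℝ} (hf : Measurable f) (ε₁ ε₂ ε₃ μ₁ μ₂ μ₃ : ℝ) :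
    Integrable f (ENNReal.ofReal ε₁ • Measure.dirac μ₁ + ENNReal.ofReal ε₂ • Measure.dirac μ₂ +
      ENNReal.ofReal ε₃ • Measure.dirac μ₃) := by
  have hd : ∀ a : ℝ, Integrable f (Measure.dirac a) := fun a => by
    refine ⟨hf.aestronglyMeasurable, ?_⟩
    rw [HasFiniteIntegral, lintegral_dirac' a hf.enorm]
    exact ENNReal.coe_lt_top
  exact (((hd μ₁).smul_measure ENNReal.ofReal_ne_top).add_measure
    ((hd μ₂).smul_measure ENNReal.ofReal_ne_top)).add_measure
    ((hd μ₃).smul_measure ENNReal.ofReal_ne_top)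

lemma dirac3_integral {f : ℝ → ℝ} (hf : Measurable f) {ε₁ ε₂ ε₃ : ℝ}
    (h1 : 0 ≤ ε₁) (h2 : 0 ≤ ε₂) (h3 : 0 ≤ ε₃) (μ₁ μ₂ μ₃ : ℝ) :
    ∫ x, f x ∂(ENNReal.ofReal ε₁ • Measure.dirac μ₁ + ENNReal.ofReal ε₂ • Measure.dirac μ₂ +
      ENNReal.ofReal ε₃ • Measure.dirac μ₃) = ε₁ * f μ₁ + ε₂ * f μ₂ + ε₃ * f μ₃ := by
  have hd : ∀ a : ℝ, Integrable f (Measure.dirac a) := fun a => by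
    refine ⟨hf.aestronglyMeasurable, ?_⟩
    rw [HasFiniteIntegral, lintegral_dirac' a hf.enorm]
    exact ENNReal.coe_lt_top
  rw [integral_add_measure (((hd μ₁).smul_measure ENNReal.ofReal_ne_top).add_measure
      ((hd μ₂).smul_measure ENNReal.ofReal_ne_top)) ((hd μ₃).smul_measure ENNReal.ofReal_ne_top),
    integral_add_measure ((hd μ₁).smul_measure ENNReal.ofReal_ne_top)
      ((hd μ₂).smul_measure ENNReal.ofReal_ne_top),
    integral_smul_measure, integral_smul_measure, integral_smul_measure,
    integral_dirac, integral_dirac, integral_dirac,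
    ENNReal.toReal_ofReal h1, ENNReal.toReal_ofReal h2, ENNReal.toReal_ofReal h3]
  simp [smul_eq_mul]

set_option maxHeartbeats 1000000 in
/-- Let `X` be a standardized 3-Dirac mixture with ordered locations
`μ₁ < μ₂ < μ₃` and probabilities `ε₁, ε₂, ε₃ > 0` summing to `1`, and let `s⋆` be the smallest
minimizer of `s ↦ Var |X - s|`; assume `s⋆ ∈ [μ₁, μ₂]`. Then
`Φ⋆(X) = 4 · min_{s ∈ ℝ} Var |X - s| ≥ 1` if and only if
`μ₁ ≥ F(ε₁) = -(√3/2) √((1 - ε₁)/ε₁)`. -/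
theorem stmt_17 (ε₁ ε₂ ε₃ μ₁ μ₂ μ₃ : ℝ)
    (hε₁ : 0 < ε₁) (hε₂ : 0 < ε₂) (hε₃ : 0 < ε₃) (hsum : ε₁ + ε₂ + ε₃ = 1)
    (h12 : μ₁ < μ₂) (h23 : μ₂ < μ₃)
    (P : Measure ℝ)
    (hP : P = ENNReal.ofReal ε₁ • Measure.dirac μ₁ + ENNReal.ofReal ε₂ • Measure.dirac μ₂ +
      ENNReal.ofReal ε₃ • Measure.dirac μ₃)
    (hmean : ∫ x, x ∂P = 0) (hm2 : ∫ x, x ^ 2 ∂P = 1)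
    (sstar : ℝ)
    (hmin : ∀ s : ℝ, variance (fun x => |x - sstar|) P ≤ variance (fun x => |x - s|) P)
    (hleast : ∀ t : ℝ,
      (∀ s : ℝ, variance (fun x => |x - t|) P ≤ variance (fun x => |x - s|) P) → sstar ≤ t)
    (hmem : sstar ∈ Set.Icc μ₁ μ₂) :
    1 ≤ 4 * (⨅ s : ℝ, variance (fun x => |x - s|) P) ↔
      -(Real.sqrt 3 / 2) * Real.sqrt ((1 - ε₁) / ε₁) ≤ μ₁ := by
  subst hP
  set P : Measure ℝ := ENNReal.ofReal ε₁ • Measure.dirac μ₁ + ENNReal.ofReal ε₂ • Measure.dirac μ₂ +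
      ENNReal.ofReal ε₃ • Measure.dirac μ₃ with hPdef
  haveI : IsProbabilityMeasure P := by
    constructor
    simp only [hPdef, Measure.coe_add, Pi.add_apply, Measure.smul_apply, smul_eq_mul,
      Measure.dirac_apply_of_mem (Set.mem_univ _), mul_one]
    rw [← ENNReal.ofReal_add hε₁.le hε₂.le, ← ENNReal.ofReal_add (by linarith) hε₃.le, hsum,
      ENNReal.ofReal_one]
  -- basic facts
  have h1ε : ε₁ < 1 := by linarith
  have hmean' : ε₁ * μ₁ + ε₂ * μ₂ + ε₃ * μ₃ = 0 := by
    have h := dirac3_integral (f := fun x => x) measurable_id hε₁.le hε₂.le hε₃.le μ₁ μ₂ μ₃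
    rw [← hPdef] at h
    exact h.symm.trans hmean
  have hm2' : ε₁ * μ₁ ^ 2 + ε₂ * μ₂ ^ 2 + ε₃ * μ₃ ^ 2 = 1 := by
    have h := dirac3_integral (f := fun x => x ^ 2) (by fun_prop) hε₁.le hε₂.le hε₃.le μ₁ μ₂ μ₃
    rw [← hPdef] at h
    exact h.symm.trans hm2
  have hμ₁neg : μ₁ < 0 := by
    nlinarith [mul_pos hε₂ (sub_pos.2 h12), mul_pos hε₃ (sub_pos.2 (h12.trans h23))]
  -- variance formula
  have hVar : ∀ s : ℝ, variance (fun x => |x - s|) P =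
      (ε₁ * (μ₁ - s) ^ 2 + ε₂ * (μ₂ - s) ^ 2 + ε₃ * (μ₃ - s) ^ 2) -
        (ε₁ * |μ₁ - s| + ε₂ * |μ₂ - s| + ε₃ * |μ₃ - s|) ^ 2 := by
    intro s
    have hf : Measurable fun x : ℝ => |x - s| := by fun_prop
    have hℒ : MemLp (fun x : ℝ => |x - s|) 2 P :=
      (memLp_two_iff_integrable_sq hf.aestronglyMeasurable).2
        (dirac3_integrable (by fun_prop) _ _ _ _ _ _)
    rw [variance_eq_sub hℒ]
    have e1 : ∫ x, |x - s| ∂P = ε₁ * |μ₁ - s| + ε₂ * |μ₂ - s| + ε₃ * |μ₃ - s| := by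
      rw [dirac3_integral hf hε₁.le hε₂.le hε₃.le]
    have e2 : ∫ x, ((fun x : ℝ => |x - s|) ^ 2) x ∂P =
        ε₁ * (μ₁ - s) ^ 2 + ε₂ * (μ₂ - s) ^ 2 + ε₃ * (μ₃ - s) ^ 2 := by
      simp only [Pi.pow_apply]
      rw [dirac3_integral (f := fun x => |x - s| ^ 2) (by fun_prop) hε₁.le hε₂.le hε₃.le]
      rw [sq_abs, sq_abs, sq_abs]
    rw [e2, e1]
  -- the quadratic on [μ₁, μ₂]
  have hg : ∀ s ∈ Set.Icc μ₁ μ₂, variance (fun x => |x - s|) P =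
      1 + s ^ 2 - ((2 * ε₁ - 1) * s - 2 * ε₁ * μ₁) ^ 2 := by
    intro s hs
    rw [hVar s]
    rw [abs_of_nonpos (by linarith [hs.1] : μ₁ - s ≤ 0),
      abs_of_nonneg (by linarith [hs.2] : (0:ℝ) ≤ μ₂ - s),
      abs_of_nonneg (by linarith [hs.2, h23] : (0:ℝ) ≤ μ₃ - s)]
    have e2 : ε₁ * (μ₁ - s) ^ 2 + ε₂ * (μ₂ - s) ^ 2 + ε₃ * (μ₃ - s) ^ 2 = 1 + s ^ 2 := by
      linear_combination hm2' - 2 * s * hmean' + s ^ 2 * hsum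
    have e1 : ε₁ * -(μ₁ - s) + ε₂ * (μ₂ - s) + ε₃ * (μ₃ - s) =
        (2 * ε₁ - 1) * s - 2 * ε₁ * μ₁ := by
      linear_combination hmean' - s * hsum
    rw [e2, e1]
  -- the quadratic on [μ₂, μ₃]
  have hh : ∀ s ∈ Set.Icc μ₂ μ₃, variance (fun x => |x - s|) P =
      1 + s ^ 2 - ((2 * ε₁ + 2 * ε₂ - 1) * s - 2 * ε₁ * μ₁ - 2 * ε₂ * μ₂) ^ 2 := by
    intro s hs
    rw [hVar s]
    rw [abs_of_nonpos (by linarith [hs.1, h12] : μ₁ - s ≤ 0),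
      abs_of_nonpos (by linarith [hs.1] : μ₂ - s ≤ 0),
      abs_of_nonneg (by linarith [hs.2] : (0:ℝ) ≤ μ₃ - s)]
    have e2 : ε₁ * (μ₁ - s) ^ 2 + ε₂ * (μ₂ - s) ^ 2 + ε₃ * (μ₃ - s) ^ 2 = 1 + s ^ 2 := by
      linear_combination hm2' - 2 * s * hmean' + s ^ 2 * hsum
    have e1 : ε₁ * -(μ₁ - s) + ε₂ * -(μ₂ - s) + ε₃ * (μ₃ - s) =
        (2 * ε₁ + 2 * ε₂ - 1) * s - 2 * ε₁ * μ₁ - 2 * ε₂ * μ₂ := by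
      linear_combination hmean' - s * hsum
    rw [e2, e1]
  -- infimum equals variance at sstar
  set V := variance (fun x => |x - sstar|) P with hVdef
  have hVs : V = 1 + sstar ^ 2 - ((2 * ε₁ - 1) * sstar - 2 * ε₁ * μ₁) ^ 2 := hg sstar hmem
  have hbdd : BddBelow (Set.range fun s : ℝ => variance (fun x => |x - s|) P) :=
    ⟨V, by rintro x ⟨s, rfl⟩; exact hmin s⟩
  have hinf : (⨅ s : ℝ, variance (fun x => |x - s|) P) = V :=
    le_antisymm (ciInf_le hbdd sstar) (le_ciInf hmin)
  clear_value V
  rw [hinf]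
  have hRnn : 0 ≤ Real.sqrt 3 / 2 * Real.sqrt ((1 - ε₁) / ε₁) := by positivity
  have hR2 : (Real.sqrt 3 / 2 * Real.sqrt ((1 - ε₁) / ε₁)) ^ 2 = 3 * (1 - ε₁) / (4 * ε₁) := by
    have hε₁' : ε₁ ≠ 0 := hε₁.ne'
    rw [mul_pow, div_pow, Real.sq_sqrt (by norm_num : (0:ℝ) ≤ 3),
      Real.sq_sqrt (div_nonneg (by linarith) hε₁.le), div_mul_div_comm]
    norm_num
  have hgoalR : -(Real.sqrt 3 / 2) * Real.sqrt ((1 - ε₁) / ε₁) =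
      -(Real.sqrt 3 / 2 * Real.sqrt ((1 - ε₁) / ε₁)) := by ring
  rw [hgoalR]
  by_cases hK : 0 ≤ 4 * ε₁ * (1 - ε₁) * μ₂ + (2 * ε₁ - 1) * (2 * ε₁ * μ₁)
  · -- vertex s₀ ≤ μ₂ : the infimum equals the vertex value
    set s₀ : ℝ := (1 - 2 * ε₁) * μ₁ / (2 * (1 - ε₁)) with hs₀
    have hden : (0:ℝ) < 2 * (1 - ε₁) := by linarith
    have hs₀ge : μ₁ ≤ s₀ := by
      rw [hs₀, le_div_iff₀ hden]; nlinarith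
    have hs₀le : s₀ ≤ μ₂ := by
      rw [hs₀, div_le_iff₀ hden]
      have hK' : 0 ≤ 2 * (1 - ε₁) * μ₂ + (2 * ε₁ - 1) * μ₁ := by
        by_contra hc; push_neg at hc; nlinarith [hK]
      nlinarith [hK']
    have hVle : V ≤ 1 + s₀ ^ 2 - ((2 * ε₁ - 1) * s₀ - 2 * ε₁ * μ₁) ^ 2 := by
      have h := hmin s₀
      rwa [hg s₀ ⟨hs₀ge, hs₀le⟩] at h
    have hglb : ∀ s : ℝ, 1 + s₀ ^ 2 - ((2 * ε₁ - 1) * s₀ - 2 * ε₁ * μ₁) ^ 2 ≤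
        1 + s ^ 2 - ((2 * ε₁ - 1) * s - 2 * ε₁ * μ₁) ^ 2 := by
      intro s
      have hid : (2 * (1 - ε₁)) ^ 2 * ((1 + s ^ 2 - ((2 * ε₁ - 1) * s - 2 * ε₁ * μ₁) ^ 2) -
          (1 + s₀ ^ 2 - ((2 * ε₁ - 1) * s₀ - 2 * ε₁ * μ₁) ^ 2)) =
          4 * ε₁ * (1 - ε₁) * (2 * (1 - ε₁) * s - (1 - 2 * ε₁) * μ₁) ^ 2 := by
        rw [hs₀]; field_simp [(by linarith : (0:ℝ) < 1 - ε₁).ne']; ring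
      have h4 : (0:ℝ) < (2 * (1 - ε₁)) ^ 2 := by positivity
      have h5 : (0:ℝ) ≤ 4 * ε₁ * (1 - ε₁) *
          (2 * (1 - ε₁) * s - (1 - 2 * ε₁) * μ₁) ^ 2 :=
        mul_nonneg (mul_nonneg (mul_nonneg (by norm_num) hε₁.le) (by linarith)) (sq_nonneg _)
      nlinarith [hid, h4, h5]
    have hVeq : V = 1 + s₀ ^ 2 - ((2 * ε₁ - 1) * s₀ - 2 * ε₁ * μ₁) ^ 2 :=
      le_antisymm hVle (by rw [hVs]; exact hglb sstar)
    have hVval : (1 - ε₁) * V = (1 - ε₁) - ε₁ * μ₁ ^ 2 := by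
      rw [hVeq, hs₀]; field_simp [(by linarith : (0:ℝ) < 1 - ε₁).ne']; ring
    constructor
    · intro h
      have h4 : 4 * ε₁ * μ₁ ^ 2 ≤ 3 * (1 - ε₁) := by nlinarith [hVval]
      have hsq : μ₁ ^ 2 ≤ (Real.sqrt 3 / 2 * Real.sqrt ((1 - ε₁) / ε₁)) ^ 2 := by
        rw [hR2, le_div_iff₀ (by linarith : (0:ℝ) < 4 * ε₁)]; linarith
      by_contra hc; push_neg at hc
      nlinarith [hsq, hRnn]
    · intro h
      have hsq : μ₁ ^ 2 ≤ (Real.sqrt 3 / 2 * Real.sqrt ((1 - ε₁) / ε₁)) ^ 2 := by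
        nlinarith [hRnn, hμ₁neg]
      have h5 : 4 * ε₁ * (Real.sqrt 3 / 2 * Real.sqrt ((1 - ε₁) / ε₁)) ^ 2 = 3 * (1 - ε₁) := by
        rw [hR2]; field_simp
      have h4 : 4 * ε₁ * μ₁ ^ 2 ≤ 3 * (1 - ε₁) := by nlinarith [hsq, hε₁]
      by_contra hc; push_neg at hc
      nlinarith [hVval, h4]
  · -- vertex beyond μ₂ : impossible
    exfalso
    push_neg at hK
    -- g is decreasing on [μ₁, μ₂]
    have h1 : 0 ≤ μ₂ - sstar := sub_nonneg.2 hmem.2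
    have hbr : 4 * ε₁ * (1 - ε₁) * (sstar + μ₂) + 2 * ((2 * ε₁ - 1) * (2 * ε₁ * μ₁)) ≤ 0 := by
      nlinarith [hK, mul_nonneg (mul_nonneg (by linarith : (0:ℝ) ≤ 4 * ε₁)
        (by linarith : (0:ℝ) ≤ 1 - ε₁)) h1]
    have hgdec : 1 + μ₂ ^ 2 - ((2 * ε₁ - 1) * μ₂ - 2 * ε₁ * μ₁) ^ 2 ≤
        1 + sstar ^ 2 - ((2 * ε₁ - 1) * sstar - 2 * ε₁ * μ₁) ^ 2 := by
      nlinarith [mul_nonneg h1 (neg_nonneg.2 hbr)]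
    -- the right-hand quadratic has negative slope at μ₂
    have hA₂ : (0:ℝ) < 1 - (2 * ε₁ + 2 * ε₂ - 1) ^ 2 := by nlinarith
    have hm : 0 < (2 * ε₁ - 1) * μ₂ - 2 * ε₁ * μ₁ := by
      have e : (2 * ε₁ - 1) * μ₂ - 2 * ε₁ * μ₁ = ε₁ * (μ₂ - μ₁) + ε₃ * (μ₃ - μ₂) := by
        linear_combination -hmean' + μ₂ * hsum
      rw [e]
      have := mul_pos hε₁ (sub_pos.2 h12)
      have := mul_pos hε₃ (sub_pos.2 h23)
      linarith
    have hK2 : (1 - (2 * ε₁ + 2 * ε₂ - 1) ^ 2) * μ₂ +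
        (2 * ε₁ + 2 * ε₂ - 1) * (2 * ε₁ * μ₁ + 2 * ε₂ * μ₂) < 0 := by
      have e2 : (1 - (2 * ε₁ + 2 * ε₂ - 1) ^ 2) * μ₂ +
          (2 * ε₁ + 2 * ε₂ - 1) * (2 * ε₁ * μ₁ + 2 * ε₂ * μ₂) =
          (4 * ε₁ * (1 - ε₁) * μ₂ + (2 * ε₁ - 1) * (2 * ε₁ * μ₁)) -
            2 * ε₂ * ((2 * ε₁ - 1) * μ₂ - 2 * ε₁ * μ₁) := by ring
      rw [e2]
      nlinarith [mul_pos hε₂ hm]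
    set t₀ : ℝ := -((2 * ε₁ + 2 * ε₂ - 1) * (2 * ε₁ * μ₁ + 2 * ε₂ * μ₂)) /
      (1 - (2 * ε₁ + 2 * ε₂ - 1) ^ 2) with ht₀
    have ht₀gt : μ₂ < t₀ := by
      rw [ht₀, lt_div_iff₀ hA₂]; linarith [hK2]
    set s₁ : ℝ := min t₀ μ₃ with hs₁
    have hs₁mem : s₁ ∈ Set.Icc μ₂ μ₃ := ⟨le_min ht₀gt.le h23.le, min_le_right _ _⟩
    have hs₁gt : μ₂ < s₁ := lt_min ht₀gt h23
    have hs₁le : s₁ ≤ t₀ := min_le_left _ _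
    have hvert : (1 - (2 * ε₁ + 2 * ε₂ - 1) ^ 2) * t₀ =
        -((2 * ε₁ + 2 * ε₂ - 1) * (2 * ε₁ * μ₁ + 2 * ε₂ * μ₂)) := by
      rw [ht₀, mul_comm]; exact div_mul_cancel₀ _ hA₂.ne'
    clear_value t₀ s₁
    have hb : (1 - (2 * ε₁ + 2 * ε₂ - 1) ^ 2) * (s₁ + μ₂) +
        2 * ((2 * ε₁ + 2 * ε₂ - 1) * (2 * ε₁ * μ₁ + 2 * ε₂ * μ₂)) < 0 := by
      have hx : (1 - (2 * ε₁ + 2 * ε₂ - 1) ^ 2) * s₁ ≤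
          (1 - (2 * ε₁ + 2 * ε₂ - 1) ^ 2) * t₀ := mul_le_mul_of_nonneg_left hs₁le hA₂.le
      have hy : (1 - (2 * ε₁ + 2 * ε₂ - 1) ^ 2) * μ₂ <
          (1 - (2 * ε₁ + 2 * ε₂ - 1) ^ 2) * t₀ := (mul_lt_mul_iff_right₀ hA₂).2 ht₀gt
      linarith [hvert]
    have hHdec : 1 + s₁ ^ 2 - ((2 * ε₁ + 2 * ε₂ - 1) * s₁ - 2 * ε₁ * μ₁ - 2 * ε₂ * μ₂) ^ 2 <
        1 + μ₂ ^ 2 - ((2 * ε₁ + 2 * ε₂ - 1) * μ₂ - 2 * ε₁ * μ₁ - 2 * ε₂ * μ₂) ^ 2 := by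
      have hp : 0 < (s₁ - μ₂) * (-((1 - (2 * ε₁ + 2 * ε₂ - 1) ^ 2) * (s₁ + μ₂) +
          2 * ((2 * ε₁ + 2 * ε₂ - 1) * (2 * ε₁ * μ₁ + 2 * ε₂ * μ₂)))) :=
        mul_pos (sub_pos.2 hs₁gt) (neg_pos.2 hb)
      have hid2 : (1 + μ₂ ^ 2 - ((2 * ε₁ + 2 * ε₂ - 1) * μ₂ - 2 * ε₁ * μ₁ - 2 * ε₂ * μ₂) ^ 2) -
          (1 + s₁ ^ 2 - ((2 * ε₁ + 2 * ε₂ - 1) * s₁ - 2 * ε₁ * μ₁ - 2 * ε₂ * μ₂) ^ 2) =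
          (s₁ - μ₂) * (-((1 - (2 * ε₁ + 2 * ε₂ - 1) ^ 2) * (s₁ + μ₂) +
          2 * ((2 * ε₁ + 2 * ε₂ - 1) * (2 * ε₁ * μ₁ + 2 * ε₂ * μ₂)))) := by ring
      linarith [hp, hid2]
    have hcontra := hmin s₁
    rw [hh s₁ hs₁mem] at hcontra
    rw [hVs] at hcontra
    have hHg : 1 + μ₂ ^ 2 - ((2 * ε₁ + 2 * ε₂ - 1) * μ₂ - 2 * ε₁ * μ₁ - 2 * ε₂ * μ₂) ^ 2 =
        1 + μ₂ ^ 2 - ((2 * ε₁ - 1) * μ₂ - 2 * ε₁ * μ₁) ^ 2 := by ring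
    linarith [hgdec, hHdec, hcontra, hHg.le, hHg.ge]
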